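/- For every real I > 1, the spiking period of the linear-quadratic phase model (LQIF) with threshold 1 and reset −1 satisfies ∫_{−1}^{1} dy / ((1−I)·(2|y| − y²) + I) = 2·arctan(√(I−1)) / √(I−1); equivalently its firing rate is r(I) = (1/2)·√(I−1) / arctan(√(I−1)). -/

import Mathlib

open Real

lemma LQIF_aux (a u v c : ℝ) (ha : 0 < a) :
    ∫ y in u..v, 1 / (a ^ 2 * (y + c) ^ 2 + 1)
      = (Real.arctan (a * (v + c)) - Real.arctan (a * (u + c))) / a := by
  have h : ∀ y ∈ Set.uIcc u v,
      HasDerivAt (fun y => Real.arctan (a * (y + c)) / a)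
        (1 / (a ^ 2 * (y + c) ^ 2 + 1)) y := by
    intro y _
    have h1 : HasDerivAt (fun y : ℝ => a * (y + c)) a y := by
      simpa using ((hasDerivAt_id y).add_const c).const_mul a
    have h2 := (Real.hasDerivAt_arctan (a * (y + c))).comp y h1
    have h3 := h2.div_const a
    convert h3 using 1
    case e'_4 => rfl
    case e'_5 => rfl
    case e'_8 => rfl
    have hpos : a ^ 2 * (y + c) ^ 2 + 1 ≠ 0 := by positivity
    field_simp
    ring
  rw [intervalIntegral.integral_eq_sub_of_hasDerivAt h ?_]
  · rw [sub_div]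
  · apply Continuous.intervalIntegrable
    exact continuous_const.div (by continuity) (fun y => by positivity)

theorem LQIF_phase_period (I : ℝ) (hI : 1 < I) :
    ∫ y in (-1 : ℝ)..1, 1 / ((1 - I) * (2 * |y| - y ^ 2) + I)
      = 2 * Real.arctan (Real.sqrt (I - 1)) / Real.sqrt (I - 1) := by
  set a := Real.sqrt (I - 1) with ha_def
  have ha : 0 < a := Real.sqrt_pos.mpr (by linarith)
  have ha2 : a ^ 2 = I - 1 := Real.sq_sqrt (by linarith)
  have hden : ∀ y : ℝ, (1 - I) * (2 * |y| - y ^ 2) + I = (I - 1) * (|y| - 1) ^ 2 + 1 := by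
    intro y
    linear_combination (1 - I) * (sq_abs y)
  have hpos : ∀ y : ℝ, (1 - I) * (2 * |y| - y ^ 2) + I ≠ 0 := by
    intro y
    rw [hden y]
    nlinarith [sq_nonneg (|y| - 1)]
  have hcont : Continuous fun y : ℝ => 1 / ((1 - I) * (2 * |y| - y ^ 2) + I) :=
    continuous_const.div (by continuity) hpos
  have hsplit :
      ∫ y in (-1 : ℝ)..1, 1 / ((1 - I) * (2 * |y| - y ^ 2) + I)
        = (∫ y in (-1 : ℝ)..0, 1 / ((1 - I) * (2 * |y| - y ^ 2) + I))
          + ∫ y in (0 : ℝ)..1, 1 / ((1 - I) * (2 * |y| - y ^ 2) + I) :=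
    (intervalIntegral.integral_add_adjacent_intervals
      (hcont.intervalIntegrable _ _) (hcont.intervalIntegrable _ _)).symm
  have h1 : (∫ y in (-1 : ℝ)..0, 1 / ((1 - I) * (2 * |y| - y ^ 2) + I))
      = ∫ y in (-1 : ℝ)..0, 1 / (a ^ 2 * (y + 1) ^ 2 + 1) := by
    apply intervalIntegral.integral_congr
    intro y hy
    rw [Set.uIcc_of_le (by norm_num : (-1 : ℝ) ≤ 0)] at hy
    have hab : |y| = -y := abs_of_nonpos hy.2
    simp only [hab, ha2]
    ring_nf
  have h2 : (∫ y in (0 : ℝ)..1, 1 / ((1 - I) * (2 * |y| - y ^ 2) + I))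
      = ∫ y in (0 : ℝ)..1, 1 / (a ^ 2 * (y + (-1)) ^ 2 + 1) := by
    apply intervalIntegral.integral_congr
    intro y hy
    rw [Set.uIcc_of_le (by norm_num : (0 : ℝ) ≤ 1)] at hy
    have hab : |y| = y := abs_of_nonneg hy.1
    simp only [hab, ha2]
    ring_nf
  rw [hsplit, h1, h2, LQIF_aux a (-1) 0 1 ha, LQIF_aux a 0 1 (-1) ha]
  simp [Real.arctan_neg]
  ring
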